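/- Let L and k be natural numbers with k < L, and let M be a real number satisfying the equation M = 2^k + M - 2^L + 2^L * ((2^L - 1)/2^L)^M (where the powers are real powers, with the exponent M a real number). Then M = Real.log (1 - 2^(k - L : ℝ)) / Real.log (1 - 1/2^L), i.e., M is the logarithm of (1 - 2^(k-L)) to the base (1 - 1/2^L). -/

import Mathlib

/-- Solving the fixed-point equation of collision-included probabilistic counting:
if `M = 2^k + M - 2^L + 2^L * (((2 : ℝ) ^ L - 1)/2^L)^M` (real powers, exponent `M` real),
then `M` is the log of `1 - 2^(k-L)` to base `1 - 1/2^L`. -/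
theorem cipc_fixed_point (L k : ℕ) (hk : k < L) (M : ℝ)
    (hM : M = 2 ^ k + M - 2 ^ L + 2 ^ L * (((2 : ℝ) ^ L - 1) / 2 ^ L) ^ M) :
    M = Real.log (1 - (2 : ℝ) ^ ((k : ℝ) - (L : ℝ))) / Real.log (1 - 1 / 2 ^ L) := by
  have h2L : (0:ℝ) < 2 ^ L := by positivity
  have hL1 : (1:ℝ) < 2 ^ L := by
    have : (2:ℝ) ^ 0 < 2 ^ L := pow_lt_pow_right₀ one_lt_two (by omega)
    simpa using this
  set b : ℝ := ((2 : ℝ) ^ L - 1) / 2 ^ L with hb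
  have hb0 : 0 < b := div_pos (by linarith) h2L
  have hb1 : b < 1 := by
    rw [hb, div_lt_one h2L]; linarith
  have hbeq : b = 1 - 1 / 2 ^ L := by
    field_simp [hb]
    rw [hb, div_mul_cancel₀ _ h2L.ne']
  have hpow : b ^ M = 1 - (2:ℝ) ^ ((k : ℝ) - (L : ℝ)) := by
    have h1 : (2:ℝ) ^ ((k : ℝ) - (L : ℝ)) = 2 ^ k / 2 ^ L := by
      rw [Real.rpow_sub two_pos, Real.rpow_natCast, Real.rpow_natCast]
    have h2 : (2:ℝ) ^ L * b ^ M = 2 ^ L - 2 ^ k := by linarith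
    rw [h1]
    field_simp
    linarith
  have hlog : M * Real.log b = Real.log (1 - (2:ℝ) ^ ((k : ℝ) - (L : ℝ))) := by
    rw [← hpow, Real.log_rpow hb0]
  have hlogne : Real.log b ≠ 0 := ne_of_lt (Real.log_neg hb0 hb1)
  rw [← hbeq, eq_div_iff hlogne, hlog]
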